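/- Let m ≥ 2, P(z) = ((m+1)/m)z + z^{m+1}, and let x ∈ E (average-zero functions I → ℂ, |I| = m) be the corresponding fixed point of H with the x_i the m distinct critical points of P. Then for each k ∈ [1, m−1], the vector v with components v_i = x_i^k is an eigenvector of D_xH with eigenvalue (m+1)/k; i.e., the spectrum of D_xH on T_xE is {(m+1)/k : k = 1,…,m−1}, which is contained in ℂ ∖ closed unit disk, so x is a repelling fixed point. -/

import Mathlib

open Finset

/-- `Qpoly m x = ∏ i (X - x i)`, the monic polynomial with roots `x i`. -/
noncomputable def Qpoly (m : ℕ) (x : Fin m → ℂ) : Polynomial ℂ :=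
  ∏ i, (Polynomial.X - Polynomial.C (x i))

/-- The antiderivative of `w ↦ ∏ i (w - x i)` vanishing at `0`. -/
noncomputable def Aanti (m : ℕ) (x : Fin m → ℂ) (t : ℂ) : ℂ :=
  ∑ n ∈ Finset.range (m + 1), (Qpoly m x).coeff n * t ^ (n + 1) / ((n : ℂ) + 1)

/-- `Ppoly m x t = ((m+1)/m) ∑_j ∫_{x_j}^t ∏_i (w - x_i) dw`, the monic centered
polynomial of degree `m+1` with critical points `x i` and centered critical values. -/
noncomputable def Ppoly (m : ℕ) (x : Fin m → ℂ) (t : ℂ) : ℂ :=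
  (((m : ℂ) + 1) / m) * ∑ j, (Aanti m x t - Aanti m x (x j))

/-- `Hmap m x = P_x ∘ x`. -/
noncomputable def Hmap (m : ℕ) (x : Fin m → ℂ) : Fin m → ℂ :=
  fun i => Ppoly m x (x i)


open Polynomial in
lemma Qpoly_monic (m : ℕ) (x : Fin m → ℂ) : (Qpoly m x).Monic :=
  monic_prod_of_monic _ _ (fun i _ => monic_X_sub_C (x i))

open Polynomial in
lemma Qpoly_natDegree (m : ℕ) (x : Fin m → ℂ) : (Qpoly m x).natDegree = m := by
  unfold Qpoly
  rw [natDegree_prod _ _ (fun i _ => X_sub_C_ne_zero (x i))]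
  simp

open Polynomial in
lemma Qpoly_eq (m : ℕ) (hm : 2 ≤ m) (x : Fin m → ℂ) (hinj : Function.Injective x)
    (hcrit : ∀ i, x i ^ m = -1 / (m : ℂ)) :
    Qpoly m x = X ^ m + C ((m : ℂ)⁻¹) := by
  have hm0 : (m : ℂ) ≠ 0 := Nat.cast_ne_zero.2 (by omega)
  have hmm : (X ^ m + C ((m:ℂ)⁻¹)).Monic := monic_X_pow_add_C _ (by omega)
  have hdeg : (X ^ m + C ((m : ℂ)⁻¹)).degree = (m : WithBot ℕ) := degree_X_pow_add_C (by omega) _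
  have key : X ^ m + C ((m : ℂ)⁻¹) - Qpoly m x = 0 := by
    rcases eq_or_ne (X ^ m + C ((m : ℂ)⁻¹) - Qpoly m x) 0 with h | h
    · exact h
    apply Polynomial.eq_zero_of_natDegree_lt_card_of_eval_eq_zero _ hinj
    · intro i
      have h1 : (Qpoly m x).eval (x i) = 0 := by
        unfold Qpoly
        rw [eval_prod]
        exact Finset.prod_eq_zero (mem_univ i) (by simp)
      simp only [eval_sub, eval_add, eval_pow, eval_X, eval_C, h1, hcrit i]
      field_simp
      ring
    · rw [Fintype.card_fin, natDegree_lt_iff_degree_lt h, ← hdeg]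
      apply degree_sub_lt
      · rw [hdeg, degree_eq_natDegree (Qpoly_monic m x).ne_zero, Qpoly_natDegree]
      · exact hmm.ne_zero
      · rw [hmm.leadingCoeff, (Qpoly_monic m x).leadingCoeff]
  exact (sub_eq_zero.mp key).symm

open Polynomial in
lemma root_mem (m : ℕ) (hm : 2 ≤ m) (x : Fin m → ℂ) (hinj : Function.Injective x)
    (hcrit : ∀ i, x i ^ m = -1 / (m : ℂ)) (z : ℂ) (hz : z ^ m = -1 / (m : ℂ)) :
    ∃ i, z = x i := by
  have hm0 : (m : ℂ) ≠ 0 := Nat.cast_ne_zero.2 (by omega)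
  have h0 : (Qpoly m x).eval z = 0 := by
    rw [Qpoly_eq m hm x hinj hcrit]
    simp [hz]
    field_simp
    ring
  unfold Qpoly at h0
  rw [eval_prod] at h0
  rcases Finset.prod_eq_zero_iff.mp h0 with ⟨i, _, hi⟩
  exact ⟨i, by simpa [sub_eq_zero] using hi⟩

lemma psum_zero (m : ℕ) (hm : 2 ≤ m) (x : Fin m → ℂ) (hinj : Function.Injective x)
    (hcrit : ∀ i, x i ^ m = -1 / (m : ℂ)) :
    ∀ j : ℕ, 1 ≤ j → j < m → ∑ i, x i ^ j = 0 := by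
  intro j hj1 hj2
  set ζ : ℂ := Complex.exp (2 * Real.pi * Complex.I / m) with hζ
  have hprim : IsPrimitiveRoot ζ m := Complex.isPrimitiveRoot_exp m (by omega)
  have hζm : ζ ^ m = 1 := hprim.pow_eq_one
  have hmem : ∀ i, ∃ i', ζ * x i = x i' := by
    intro i
    apply root_mem m hm x hinj hcrit
    rw [mul_pow, hζm, one_mul, hcrit i]
  choose σ hσ using hmem
  have hσinj : Function.Injective σ := by
    intro a b hab
    have : ζ * x a = ζ * x b := by rw [hσ a, hσ b, hab]
    have hζ0 : ζ ≠ 0 := Complex.exp_ne_zero _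
    exact hinj (mul_left_cancel₀ hζ0 this)
  have hσbij : Function.Bijective σ := (Finite.injective_iff_bijective).mp hσinj
  have h2 : ζ ^ j * ∑ i, x i ^ j = ∑ i, x i ^ j := by
    calc ζ ^ j * ∑ i, x i ^ j = ∑ i, (ζ * x i) ^ j := by
          rw [Finset.mul_sum]; congr 1; ext i; rw [mul_pow]
      _ = ∑ i, x (σ i) ^ j := by congr 1; ext i; rw [hσ i]
      _ = ∑ i, x i ^ j := Fintype.sum_bijective σ hσbij _ _ (fun i => rfl)
  have hζj : ζ ^ j ≠ 1 := hprim.pow_ne_one_of_pos_of_lt (by omega) hj2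
  have h3 : (ζ ^ j - 1) * ∑ i, x i ^ j = 0 := by rw [sub_mul, h2, one_mul, sub_self]
  exact (mul_eq_zero.mp h3).resolve_left (sub_ne_zero.mpr hζj)

open Polynomial in
lemma psum_m (m : ℕ) (hm : 2 ≤ m) (x : Fin m → ℂ)
    (hcrit : ∀ i, x i ^ m = -1 / (m : ℂ)) : ∑ i, x i ^ m = -1 := by
  have hm0 : (m : ℂ) ≠ 0 := Nat.cast_ne_zero.2 (by omega)
  simp only [hcrit]
  rw [Finset.sum_const, Finset.card_univ, Fintype.card_fin, nsmul_eq_mul]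
  field_simp

open Polynomial in
lemma prod_erase_eq (m : ℕ) (hm : 2 ≤ m) (x : Fin m → ℂ) (hinj : Function.Injective x)
    (hcrit : ∀ i, x i ^ m = -1 / (m : ℂ)) (i : Fin m) :
    ∏ j ∈ univ.erase i, (X - C (x j)) = ∑ r ∈ range m, X ^ r * C (x i) ^ (m - 1 - r) := by
  have hne : (X - C (x i)) ≠ (0 : Polynomial ℂ) := X_sub_C_ne_zero (x i)
  apply mul_left_cancel₀ hne
  have h1 : (X - C (x i)) * ∏ j ∈ univ.erase i, (X - C (x j)) = Qpoly m x := by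
    unfold Qpoly
    rw [← Finset.prod_erase_mul univ _ (mem_univ i)]
    ring
  rw [h1, Qpoly_eq m hm x hinj hcrit, mul_comm, geom_sum₂_mul, ← map_pow, hcrit i,
    sub_eq_add_neg, ← map_neg]
  congr 1
  rw [neg_div, neg_neg, one_div]

open Polynomial in
lemma Rsum_eq (m : ℕ) (hm : 2 ≤ m) (x : Fin m → ℂ) (hinj : Function.Injective x)
    (hcrit : ∀ i, x i ^ m = -1 / (m : ℂ)) (k : ℕ) (hk1 : 1 ≤ k) (hk2 : k ≤ m - 1) :
    ∑ i, C (x i ^ k) * ∏ j ∈ univ.erase i, (X - C (x j)) = -(X ^ (k - 1)) := by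
  have hsum : ∀ i : Fin m, C (x i ^ k) * ∏ j ∈ univ.erase i, (X - C (x j))
      = ∑ r ∈ range m, X ^ r * C (x i ^ (k + (m - 1 - r))) := by
    intro i
    rw [prod_erase_eq m hm x hinj hcrit i, Finset.mul_sum]
    refine Finset.sum_congr rfl fun r _ => ?_
    simp only [pow_add, map_mul, map_pow]
    ring
  simp only [hsum]
  rw [Finset.sum_comm]
  have hterm : ∀ r : ℕ, ∑ i, X ^ r * C (x i ^ (k + (m - 1 - r)))
      = X ^ r * C (∑ i, x i ^ (k + (m - 1 - r))) := by
    intro r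
    rw [← Finset.mul_sum, ← map_sum]
  simp only [hterm]
  rw [Finset.sum_eq_single_of_mem (k - 1) (Finset.mem_range.mpr (by omega))]
  · have he : k + (m - 1 - (k - 1)) = m := by omega
    rw [he, psum_m m hm x hcrit, map_neg, map_one, mul_neg_one]
  · intro r hr hrne
    rw [Finset.mem_range] at hr
    rcases lt_or_ge r (k - 1) with h | h
    · have he : k + (m - 1 - r) = m + (k - 1 - r) := by omega
      rw [he]
      simp only [pow_add, hcrit]
      rw [← Finset.mul_sum, psum_zero m hm x hinj hcrit (k - 1 - r) (by omega) (by omega)]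
      simp
    · have h' : k ≤ r := by omega
      rw [psum_zero m hm x hinj hcrit (k + (m - 1 - r)) (by omega) (by omega), map_zero,
        mul_zero]
section HP
open Polynomial

def HPder (f : ℂ → Polynomial ℂ) (a : Polynomial ℂ) : Prop :=
  ∀ n, HasDerivAt (fun s => (f s).coeff n) (a.coeff n) 0

lemma hasDerivAt_line (c v : ℂ) : HasDerivAt (fun s : ℂ => c + s * v) v 0 := by
  simpa using ((hasDerivAt_id (0:ℂ)).mul_const v).const_add c

lemma HPder.mul {f g : ℂ → Polynomial ℂ} {a b : Polynomial ℂ}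
    (hf : HPder f a) (hg : HPder g b) :
    HPder (fun s => f s * g s) (a * g 0 + f 0 * b) := by
  intro n
  have h : HasDerivAt
      (fun s => ∑ p ∈ Finset.HasAntidiagonal.antidiagonal n, (f s).coeff p.1 * (g s).coeff p.2)
      (∑ p ∈ Finset.HasAntidiagonal.antidiagonal n,
        (a.coeff p.1 * (g 0).coeff p.2 + (f 0).coeff p.1 * b.coeff p.2)) 0 :=
    HasDerivAt.fun_sum (fun p _ => (hf p.1).fun_mul (hg p.2))
  simpa [Polynomial.coeff_mul, Polynomial.coeff_add, Finset.sum_add_distrib] using h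

lemma HPder.base (c v : ℂ) : HPder (fun s => X - C (c + s * v)) (-C v) := by
  intro n
  match n with
  | 0 =>
    have h1 : (fun s : ℂ => ((X : Polynomial ℂ) - C (c + s * v)).coeff 0)
        = fun s => -(c + s * v) := by
      funext s; simp
    have h2 : ((-C v : Polynomial ℂ)).coeff 0 = -v := by simp
    rw [h1, h2]
    exact (hasDerivAt_line c v).neg
  | (n+1) =>
    have h1 : (fun s : ℂ => ((X : Polynomial ℂ) - C (c + s * v)).coeff (n+1))
        = fun _ => (X : Polynomial ℂ).coeff (n+1) := by
      funext s; simp [Polynomial.coeff_C]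
    have h2 : ((-C v : Polynomial ℂ)).coeff (n+1) = 0 := by simp [Polynomial.coeff_C]
    rw [h1, h2]
    exact hasDerivAt_const _ _

lemma HPder.prod {m : ℕ} (x v : Fin m → ℂ) (s : Finset (Fin m)) :
    HPder (fun t => ∏ i ∈ s, (X - C (x i + t * v i)))
      (∑ i ∈ s, -C (v i) * ∏ j ∈ s.erase i, (X - C (x j))) := by
  classical
  induction s using Finset.induction_on with
  | empty =>
    intro n
    simp only [Finset.prod_empty, Finset.sum_empty, Polynomial.coeff_zero]
    exact hasDerivAt_const _ _
  | insert a s' ha ih =>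
    have h := (HPder.base (x a) (v a)).mul ih
    simp only [zero_mul, add_zero] at h
    have hpoly : ∑ i ∈ insert a s', -C (v i) * ∏ j ∈ (insert a s').erase i, (X - C (x j))
        = -C (v a) * ∏ i ∈ s', (X - C (x i))
          + (X - C (x a)) * ∑ i ∈ s', -C (v i) * ∏ j ∈ s'.erase i, (X - C (x j)) := by
      rw [Finset.sum_insert ha, Finset.erase_insert ha]
      congr 1
      rw [Finset.mul_sum]
      refine Finset.sum_congr rfl fun i hi => ?_
      rw [Finset.erase_insert_of_ne (ne_of_mem_of_not_mem hi ha).symm,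
        Finset.prod_insert (fun h => ha (Finset.mem_of_mem_erase h))]
      ring
    intro n
    simp only [Finset.prod_insert ha, hpoly]
    exact h n

end HP

section Calc
open Polynomial

lemma coeff_prod_diff {m : ℕ} (s : Finset (Fin m)) :
    ∀ n, Differentiable ℂ (fun y : Fin m → ℂ => (∏ i ∈ s, (X - C (y i))).coeff n) := by
  classical
  induction s using Finset.induction_on with
  | empty =>
    intro n
    simp only [Finset.prod_empty]
    exact differentiable_const _
  | insert a s' ha ih =>
    intro n
    have hbase : ∀ q, Differentiable ℂ
        (fun y : Fin m → ℂ => ((X : Polynomial ℂ) - C (y a)).coeff q) := by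
      intro q
      match q with
      | 0 =>
        have h : (fun y : Fin m → ℂ => ((X : Polynomial ℂ) - C (y a)).coeff 0)
            = fun y => -(y a) := by funext y; simp
        rw [h]
        exact ((ContinuousLinearMap.proj a : (Fin m → ℂ) →L[ℂ] ℂ).differentiable).neg
      | (q+1) =>
        have h : (fun y : Fin m → ℂ => ((X : Polynomial ℂ) - C (y a)).coeff (q+1))
            = fun _ => (X : Polynomial ℂ).coeff (q+1) := by
          funext y; simp [Polynomial.coeff_C]
        rw [h]
        exact differentiable_const _
    simp only [Finset.prod_insert ha, Polynomial.coeff_mul]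
    exact Differentiable.fun_sum (fun p _ => (hbase p.1).mul (ih p.2))

lemma Aanti_diff {m : ℕ} (j : Fin m) :
    Differentiable ℂ (fun y : Fin m → ℂ => Aanti m y (y j)) := by
  unfold Aanti Qpoly
  apply Differentiable.fun_sum
  intro n _
  have hd := (coeff_prod_diff (m := m) Finset.univ n).mul
    (((ContinuousLinearMap.proj j : (Fin m → ℂ) →L[ℂ] ℂ).differentiable).pow (n+1))
  simpa [div_eq_mul_inv] using hd.mul_const (((n:ℂ)+1)⁻¹)

lemma Hmap_diff {m : ℕ} : Differentiable ℂ (Hmap m) := by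
  rw [differentiable_pi]
  intro i
  unfold Hmap Ppoly
  apply Differentiable.const_mul
  apply Differentiable.fun_sum
  intro j _
  exact (Aanti_diff i).sub (Aanti_diff j)

lemma hasDerivAt_Aanti (m : ℕ) (hm : 2 ≤ m) (x : Fin m → ℂ) (hinj : Function.Injective x)
    (hcrit : ∀ i, x i ^ m = -1 / (m : ℂ)) (k : ℕ) (hk1 : 1 ≤ k) (hk2 : k ≤ m - 1) (j : Fin m) :
    HasDerivAt (fun s : ℂ => Aanti m (x + s • fun i => x i ^ k) ((x + s • fun i => x i ^ k) j))
      (x j ^ k / k) 0 := by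
  set v : Fin m → ℂ := fun i => x i ^ k with hv
  have hk0 : (k : ℂ) ≠ 0 := Nat.cast_ne_zero.2 (by omega)
  have hfun : ∀ s : ℂ, (x + s • v) = fun i => x i + s * v i := by
    intro s; funext i; simp [Pi.add_apply, Pi.smul_apply, smul_eq_mul]
  have hQfun : ∀ s : ℂ, Qpoly m (x + s • v) = ∏ i, (X - C (x i + s * v i)) := by
    intro s; unfold Qpoly; rw [hfun s]
  have hD : (∑ i, -C (v i) * ∏ j' ∈ Finset.univ.erase i, (X - C (x j')))
      = (X : Polynomial ℂ) ^ (k - 1) := by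
    have h := Rsum_eq m hm x hinj hcrit k hk1 hk2
    have h2 : ∀ i : Fin m, -C (v i) * ∏ j' ∈ Finset.univ.erase i, (X - C (x j'))
        = -(C (x i ^ k) * ∏ j' ∈ Finset.univ.erase i, (X - C (x j'))) := by
      intro i; simp only [hv]; ring
    simp only [h2]
    rw [Finset.sum_neg_distrib, h, neg_neg]
  have hc : ∀ n, HasDerivAt (fun s : ℂ => (Qpoly m (x + s • v)).coeff n)
      (((X : Polynomial ℂ) ^ (k - 1)).coeff n) 0 := by
    intro n
    have h := HPder.prod x v Finset.univ n
    rw [hD] at h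
    simpa only [← hQfun] using h
  have heval : (Qpoly m x).eval (x j) = 0 := by
    unfold Qpoly
    rw [eval_prod]
    exact Finset.prod_eq_zero (Finset.mem_univ j) (by simp)
  have h := HasDerivAt.fun_sum
    (fun n (_ : n ∈ Finset.range (m+1)) =>
      ((hc n).fun_mul ((hasDerivAt_line (x j) (v j)).fun_pow (n+1))).div_const ((n:ℂ)+1))
  simp only [zero_mul, add_zero, zero_smul, Nat.add_sub_cancel] at h
  have hSeq : (∑ n ∈ Finset.range (m+1),
      (((X : Polynomial ℂ) ^ (k-1)).coeff n * (x j) ^ (n+1)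
        + (Qpoly m x).coeff n * (↑(n+1) * (x j) ^ n * v j)) / ((n:ℂ)+1))
      = x j ^ k / k := by
    have hsplit : ∀ n ∈ Finset.range (m+1),
        (((X : Polynomial ℂ) ^ (k-1)).coeff n * (x j) ^ (n+1)
          + (Qpoly m x).coeff n * (↑(n+1) * (x j) ^ n * v j)) / ((n:ℂ)+1)
        = ((X : Polynomial ℂ) ^ (k-1)).coeff n * (x j) ^ (n+1) / ((n:ℂ)+1)
          + v j * ((Qpoly m x).coeff n * (x j) ^ n) := by
      intro n _
      have hne : ((n:ℂ)+1) ≠ 0 := Nat.cast_add_one_ne_zero n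
      push_cast
      field_simp
    rw [Finset.sum_congr rfl hsplit, Finset.sum_add_distrib, ← Finset.mul_sum]
    have he : ∑ n ∈ Finset.range (m+1), (Qpoly m x).coeff n * x j ^ n
        = (Qpoly m x).eval (x j) := by
      conv_rhs => rw [Polynomial.eval_eq_sum_range]
      rw [Qpoly_natDegree]
    rw [he, heval, mul_zero, add_zero]
    rw [Finset.sum_eq_single_of_mem (k-1) (Finset.mem_range.mpr (by omega))]
    · rw [Polynomial.coeff_X_pow, if_pos rfl, one_mul]
      have h1 : k - 1 + 1 = k := by omega
      have h2 : ((k-1 : ℕ) : ℂ) + 1 = (k : ℂ) := by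
        rw [Nat.cast_sub hk1]; push_cast; ring
      rw [h1, h2]
    · intro n _ hne
      rw [Polynomial.coeff_X_pow, if_neg hne, zero_mul, zero_div]
  rw [hSeq] at h
  have hAfun : (fun s : ℂ => Aanti m (x + s • v) ((x + s • v) j))
      = (fun s : ℂ => ∑ n ∈ Finset.range (m+1),
          (Qpoly m (x + s • v)).coeff n * (x j + s * v j) ^ (n+1) / ((n:ℂ)+1)) := by
    funext s
    unfold Aanti
    have ht : (x + s • v) j = x j + s * v j := by
      simp [Pi.add_apply, Pi.smul_apply, smul_eq_mul]
    rw [ht]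
  rw [hAfun]
  exact h

end Calc

/-- At the fixed point `x` of `H` whose components are the `m` distinct critical
points of `P z = ((m+1)/m) z + z^(m+1)` (i.e. the `m`-th roots of `-1/m`), the
vector `(x i ^ k)_i` is an eigenvector of `D_x H` with eigenvalue `(m+1)/k`, for
each `k ∈ [1, m-1]`; these eigenvalues lie outside the closed unit disk, so `x`
is repelling. -/

theorem Hmap_spectrum_at_free_fixed_point (m : ℕ) (hm : 2 ≤ m) (x : Fin m → ℂ)
    (hinj : Function.Injective x) (hcrit : ∀ i, x i ^ m = -1 / (m : ℂ))
    (hfix : Hmap m x = x) :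
    ∀ k : ℕ, 1 ≤ k → k ≤ m - 1 →
      (∑ i, x i ^ k = 0) ∧
      fderiv ℂ (Hmap m) x (fun i => x i ^ k)
        = ((((m : ℂ) + 1) / k) • fun i => x i ^ k) ∧
      1 < ‖((m : ℂ) + 1) / k‖ := by
  intro k hk1 hk2
  have hm0 : (m : ℂ) ≠ 0 := Nat.cast_ne_zero.2 (by omega)
  have hk0 : (k : ℂ) ≠ 0 := Nat.cast_ne_zero.2 (by omega)
  set v : Fin m → ℂ := fun i => x i ^ k with hv
  have hsum : ∑ i, x i ^ k = 0 := psum_zero m hm x hinj hcrit k hk1 (by omega)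
  refine ⟨hsum, ?_, ?_⟩
  · have hγ : HasDerivAt (fun s : ℂ => x + s • v) v 0 := by
      rw [hasDerivAt_pi]
      intro j
      have := hasDerivAt_line (x j) (v j)
      simpa [Pi.add_apply, Pi.smul_apply, smul_eq_mul] using this
    have hx0 : x + (0:ℂ) • v = x := by simp
    have hL : HasFDerivAt (Hmap m) (fderiv ℂ (Hmap m) x) ((fun s : ℂ => x + s • v) 0) := by
      simpa [hx0] using (Hmap_diff (m := m) x).hasFDerivAt
    have hcomp : HasDerivAt (fun s : ℂ => Hmap m (x + s • v)) (fderiv ℂ (Hmap m) x v) 0 :=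
      by have := hL.comp_hasDerivAt (x := 0) hγ; exact this
    have hcomp2 : HasDerivAt (fun s : ℂ => Hmap m (x + s • v))
        (fun i => (((m:ℂ)+1)/k) * x i ^ k) 0 := by
      rw [hasDerivAt_pi]
      intro i
      have hA : ∀ j : Fin m, HasDerivAt
          (fun s : ℂ => Aanti m (x + s • v) ((x + s • v) j)) (x j ^ k / k) 0 :=
        fun j => hasDerivAt_Aanti m hm x hinj hcrit k hk1 hk2 j
      have h := (HasDerivAt.fun_sum
        (fun j (_ : j ∈ (Finset.univ : Finset (Fin m))) => (hA i).sub (hA j))).const_mul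
        (((m:ℂ)+1)/m)
      have hval : (((m:ℂ)+1)/m) * (∑ j, (x i ^ k / k - x j ^ k / k))
          = (((m:ℂ)+1)/k) * x i ^ k := by
        rw [Finset.sum_sub_distrib, Finset.sum_const, Finset.card_univ, Fintype.card_fin,
          ← Finset.sum_div, hsum, zero_div, sub_zero, nsmul_eq_mul]
        field_simp
      rw [hval] at h
      have hfn : (fun s : ℂ => Hmap m (x + s • v) i)
          = (fun s : ℂ => (((m:ℂ)+1)/m) * ∑ j, (Aanti m (x + s • v) ((x + s • v) i)
              - Aanti m (x + s • v) ((x + s • v) j))) := by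
        funext s
        simp only [Hmap, Ppoly]
      rw [hfn]
      exact h
    have huniq := hcomp.unique hcomp2
    rw [huniq]
    funext i
    simp [Pi.smul_apply, smul_eq_mul]
    exact Or.inl rfl
  · have hcast : (((m:ℂ)+1)/(k:ℂ)) = (((m+1 : ℕ) : ℂ))/((k : ℕ) : ℂ) := by push_cast; ring
    rw [hcast, norm_div, Complex.norm_natCast, Complex.norm_natCast]
    rw [lt_div_iff₀ (by exact_mod_cast (by omega : 0 < k)), one_mul]
    exact_mod_cast (by omega : k < m + 1)
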